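/- Let d₁, d₂, M be positive integers with d₂M ≥ d₁. With U Haar-distributed on U(d₂M), V_U the first d₁ columns of U, and Φ_U(X) = Tr_M(V_U X V_U†), the average channel is the maximally depolarizing channel: for every X ∈ M_{d₁}(ℂ), ∫_{U(d₂M)} Φ_U(X) dμ(U) = Tr(X) · 𝟙_{d₂}/d₂ (the integral taken entrywise). Equivalently, the average Choi matrix satisfies ∫ J_{Φ_U} dμ(U) = 𝟙_{d₂d₁}/d₂, where J_Φ = Σ_{i,j=1}^{d₁} Φ(E_{ij}) ⊗ E_{ij}. -/

import Mathlib

open Matrix MeasureTheory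
open scoped Kronecker

noncomputable section

instance matrixMeasurableSpace {m n : Type*} : MeasurableSpace (Matrix m n ℂ) :=
  inferInstanceAs (MeasurableSpace (m → n → ℂ))

/-- The first `d₁` columns of a unitary of size `d₂M`, under the identification
`ℂ^{d₂M} ≅ ℂ^{d₂} ⊗ ℂ^{M}`. -/
def stinespringIsometry (d₁ d₂ M : ℕ) (h : d₁ ≤ d₂ * M)
    (U : Matrix.unitaryGroup (Fin d₂ × Fin M) ℂ) :
    Matrix (Fin d₂ × Fin M) (Fin d₁) ℂ :=
  Matrix.of fun p i =>
    (U : Matrix (Fin d₂ × Fin M) (Fin d₂ × Fin M) ℂ) p (finProdFinEquiv.symm (Fin.castLE h i))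

/-- Partial trace over the second (environment) factor. -/
def ptrEnv {d M : ℕ} (Y : Matrix (Fin d × Fin M) (Fin d × Fin M) ℂ) :
    Matrix (Fin d) (Fin d) ℂ :=
  Matrix.of fun a b => ∑ k : Fin M, Y (a, k) (b, k)

/-- The random Stinespring channel `Φ_U(X) = Tr_M(V_U X V_U†)`. -/
def stinespringChannel (d₁ d₂ M : ℕ) (h : d₁ ≤ d₂ * M)
    (U : Matrix.unitaryGroup (Fin d₂ × Fin M) ℂ)
    (X : Matrix (Fin d₁) (Fin d₁) ℂ) : Matrix (Fin d₂) (Fin d₂) ℂ :=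
  ptrEnv (stinespringIsometry d₁ d₂ M h U * X * (stinespringIsometry d₁ d₂ M h U)ᴴ)

section AuxHaar

variable {n : Type*} [Fintype n] [DecidableEq n]

lemma measurable_unitary_entry (p q : n) :
    Measurable fun U : Matrix.unitaryGroup n ℂ => (U : Matrix n n ℂ) p q := by
  have h0 : Measurable fun A : Matrix n n ℂ => A p q :=
    ((measurable_pi_apply q).comp (measurable_pi_apply p) :
      Measurable fun A : n → n → ℂ => A p q)
  exact h0.comp measurable_subtype_coe

lemma unitary_entry_norm_le (U : Matrix.unitaryGroup n ℂ) (p q : n) :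
    ‖(U : Matrix n n ℂ) p q‖ ≤ 1 := by
  have h1 : (star (U : Matrix n n ℂ) * U) q q = 1 := by
    rw [Matrix.UnitaryGroup.star_mul_self]; simp
  rw [Matrix.mul_apply] at h1
  have h2 : ∀ r, (star (U : Matrix n n ℂ)) q r * (U : Matrix n n ℂ) r q
      = (Complex.normSq ((U : Matrix n n ℂ) r q) : ℂ) := by
    intro r
    simp [Matrix.conjTranspose_apply, Complex.normSq_eq_conj_mul_self]
  rw [Finset.sum_congr rfl (fun r _ => h2 r)] at h1
  have h3 : ∑ r, Complex.normSq ((U : Matrix n n ℂ) r q) = 1 := by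
    exact_mod_cast h1
  have h4 : Complex.normSq ((U : Matrix n n ℂ) p q) ≤ 1 := by
    rw [← h3]
    exact Finset.single_le_sum (f := fun r => Complex.normSq ((U : Matrix n n ℂ) r q))
      (fun r _ => Complex.normSq_nonneg _) (Finset.mem_univ p)
  have h5 : ‖(U : Matrix n n ℂ) p q‖ ^ 2 ≤ 1 := by
    calc ‖(U : Matrix n n ℂ) p q‖ ^ 2 = Complex.normSq ((U : Matrix n n ℂ) p q) := by
          rw [Complex.sq_norm]
      _ ≤ 1 := h4
  nlinarith [norm_nonneg ((U : Matrix n n ℂ) p q)]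

lemma measurable_entry_mul (p i q j : n) :
    Measurable (fun U : Matrix.unitaryGroup n ℂ =>
      (U : Matrix n n ℂ) p i * (starRingEnd ℂ) ((U : Matrix n n ℂ) q j)) :=
  (measurable_unitary_entry p i).mul (Complex.continuous_conj.measurable.comp (measurable_unitary_entry q j))

lemma integrable_entry_mul (μ : Measure (Matrix.unitaryGroup n ℂ)) [IsProbabilityMeasure μ]
    (p i q j : n) :
    Integrable (fun U : Matrix.unitaryGroup n ℂ =>
      (U : Matrix n n ℂ) p i * (starRingEnd ℂ) ((U : Matrix n n ℂ) q j)) μ := by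
  apply Integrable.mono' (g := fun _ => (1 : ℝ)) (integrable_const 1)
    (measurable_entry_mul p i q j).aestronglyMeasurable
  filter_upwards with U
  rw [norm_mul, RCLike.norm_conj]
  calc ‖(U : Matrix n n ℂ) p i‖ * ‖(U : Matrix n n ℂ) q j‖ ≤ 1 * 1 :=
        mul_le_mul (unitary_entry_norm_le U p i) (unitary_entry_norm_le U q j)
          (norm_nonneg _) zero_le_one
    _ = 1 := one_mul 1

lemma measurable_mul_left (g : Matrix.unitaryGroup n ℂ) :
    Measurable (fun x : Matrix.unitaryGroup n ℂ => g * x) := by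
  apply Measurable.subtype_mk
  show Measurable fun x : Matrix.unitaryGroup n ℂ => (g : Matrix n n ℂ) * (x : Matrix n n ℂ)
  apply measurable_pi_lambda
  intro a
  apply measurable_pi_lambda
  intro b
  show Measurable fun x : Matrix.unitaryGroup n ℂ => ((g : Matrix n n ℂ) * x) a b
  simp only [Matrix.mul_apply]
  exact Finset.measurable_sum _ fun c _ =>
    (measurable_unitary_entry c b).const_mul _

lemma integral_comp_mul_left (μ : Measure (Matrix.unitaryGroup n ℂ))
    (hμ : ∀ g : Matrix.unitaryGroup n ℂ, μ.map (fun x => g * x) = μ)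
    (g : Matrix.unitaryGroup n ℂ) (f : Matrix.unitaryGroup n ℂ → ℂ)
    (hf : AEStronglyMeasurable f μ) :
    ∫ U, f (g * U) ∂μ = ∫ U, f U ∂μ := by
  conv_rhs => rw [← hμ g]
  rw [integral_map (measurable_mul_left g).aemeasurable]
  rw [hμ g]; exact hf

def signUnitary (p : n) : Matrix.unitaryGroup n ℂ :=
  ⟨Matrix.diagonal (fun r => if r = p then -1 else 1), by
    rw [Matrix.mem_unitaryGroup_iff]
    rw [Matrix.star_eq_conjTranspose, Matrix.diagonal_conjTranspose,
      Matrix.diagonal_mul_diagonal]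
    ext r s
    by_cases hr : r = p <;> by_cases hrs : r = s <;>
      simp_all [Matrix.diagonal_apply, Matrix.one_apply, Pi.star_apply]⟩

lemma signUnitary_coe (p r s : n) :
    (signUnitary p : Matrix n n ℂ) r s
      = Matrix.diagonal (fun r => if r = p then (-1 : ℂ) else 1) r s := rfl

def permUnitary (σ : Equiv.Perm n) : Matrix.unitaryGroup n ℂ :=
  ⟨Matrix.of fun a b => if σ a = b then (1 : ℂ) else 0, by
    rw [Matrix.mem_unitaryGroup_iff]
    ext a b
    rw [Matrix.mul_apply]
    simp only [Matrix.star_apply, Matrix.star_eq_conjTranspose, Matrix.conjTranspose_apply,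
      Matrix.of_apply]
    classical
    have : ∀ c, (if σ a = c then (1:ℂ) else 0) * star (if σ b = c then (1:ℂ) else 0)
        = if σ a = c then (if σ b = c then 1 else 0) else 0 := by
      intro c
      by_cases h1 : σ a = c <;> by_cases h2 : σ b = c <;> simp [h1, h2]
    rw [Finset.sum_congr rfl fun c _ => this c]
    rw [Finset.sum_ite_eq Finset.univ (σ a) (fun c => if σ b = c then (1:ℂ) else 0)]
    simp [Matrix.one_apply, σ.injective.eq_iff, eq_comm]⟩

lemma permUnitary_mul_apply (σ : Equiv.Perm n) (U : Matrix.unitaryGroup n ℂ) (a s : n) :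
    ((permUnitary σ * U : Matrix.unitaryGroup n ℂ) : Matrix n n ℂ) a s
      = (U : Matrix n n ℂ) (σ a) s := by
  show ((permUnitary σ : Matrix n n ℂ) * (U : Matrix n n ℂ)) a s = _
  rw [Matrix.mul_apply]
  have : ∀ c, (permUnitary σ : Matrix n n ℂ) a c * (U : Matrix n n ℂ) c s
      = if σ a = c then (U : Matrix n n ℂ) c s else 0 := by
    intro c
    by_cases h1 : σ a = c <;> simp [permUnitary, Matrix.of_apply, h1]
  rw [Finset.sum_congr rfl fun c _ => this c,
    Finset.sum_ite_eq Finset.univ (σ a) (fun c => (U : Matrix n n ℂ) c s)]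
  simp

lemma signUnitary_mul_apply (p : n) (U : Matrix.unitaryGroup n ℂ) (a s : n) :
    ((signUnitary p * U : Matrix.unitaryGroup n ℂ) : Matrix n n ℂ) a s
      = (if a = p then -1 else 1) * (U : Matrix n n ℂ) a s := by
  show ((signUnitary p : Matrix n n ℂ) * (U : Matrix n n ℂ)) a s = _
  show (Matrix.diagonal (fun r => if r = p then (-1:ℂ) else 1) * (U : Matrix n n ℂ)) a s = _
  rw [Matrix.diagonal_mul]

lemma moment (μ : Measure (Matrix.unitaryGroup n ℂ)) [IsProbabilityMeasure μ]
    (hμ : ∀ g : Matrix.unitaryGroup n ℂ, μ.map (fun x => g * x) = μ)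
    (p q i j : n) :
    ∫ U, (U : Matrix n n ℂ) p i * (starRingEnd ℂ) ((U : Matrix n n ℂ) q j) ∂μ
      = (if p = q then 1 else 0) * (if i = j then 1 else 0) / (Fintype.card n : ℂ) := by
  by_cases hpq : p = q
  · subst hpq
    -- step 1: the integral is independent of the row p
    have step1 : ∀ r : n,
        ∫ U, (U : Matrix n n ℂ) r i * (starRingEnd ℂ) ((U : Matrix n n ℂ) r j) ∂μ
          = ∫ U, (U : Matrix n n ℂ) p i * (starRingEnd ℂ) ((U : Matrix n n ℂ) p j) ∂μ := by
      intro r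
      have h0 := integral_comp_mul_left μ hμ (permUnitary (Equiv.swap p r))
        (fun U => (U : Matrix n n ℂ) p i * (starRingEnd ℂ) ((U : Matrix n n ℂ) p j))
        (measurable_entry_mul p i p j).aestronglyMeasurable
      rw [← h0]
      have hU : ∀ U : Matrix.unitaryGroup n ℂ,
          (U : Matrix n n ℂ) r i * (starRingEnd ℂ) ((U : Matrix n n ℂ) r j)
            = ((permUnitary (Equiv.swap p r) * U : Matrix.unitaryGroup n ℂ) : Matrix n n ℂ) p i *
              (starRingEnd ℂ) (((permUnitary (Equiv.swap p r) * U :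
                Matrix.unitaryGroup n ℂ) : Matrix n n ℂ) p j) := by
        intro U
        rw [permUnitary_mul_apply, permUnitary_mul_apply, Equiv.swap_apply_left]
      exact integral_congr_ae (Filter.Eventually.of_forall fun U => hU U)
    -- step 2: summing over rows gives delta_{ij}
    have step2 : ∑ r : n, (∫ U, (U : Matrix n n ℂ) r i *
          (starRingEnd ℂ) ((U : Matrix n n ℂ) r j) ∂μ)
        = if i = j then 1 else 0 := by
      rw [← integral_finset_sum _ (fun r _ => integrable_entry_mul μ r i r j)]
      have : ∀ U : Matrix.unitaryGroup n ℂ,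
          ∑ r : n, (U : Matrix n n ℂ) r i * (starRingEnd ℂ) ((U : Matrix n n ℂ) r j)
            = if i = j then 1 else 0 := by
        intro U
        have h1 : (star (U : Matrix n n ℂ) * U) j i = (1 : Matrix n n ℂ) j i := by
          rw [Matrix.UnitaryGroup.star_mul_self]
        rw [Matrix.mul_apply] at h1
        simp only [Matrix.star_eq_conjTranspose, Matrix.conjTranspose_apply] at h1
        calc ∑ r : n, (U : Matrix n n ℂ) r i * (starRingEnd ℂ) ((U : Matrix n n ℂ) r j)
            = ∑ r : n, star ((U : Matrix n n ℂ) r j) * (U : Matrix n n ℂ) r i := by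
              apply Finset.sum_congr rfl; intro r _; rw [mul_comm]; rfl
          _ = (1 : Matrix n n ℂ) j i := h1
          _ = if i = j then 1 else 0 := by rw [Matrix.one_apply]; simp [eq_comm]
      rw [integral_congr_ae (Filter.Eventually.of_forall this), integral_const]
      simp
    rw [Finset.sum_congr rfl (fun r _ => step1 r), Finset.sum_const, Finset.card_univ,
      nsmul_eq_mul] at step2
    have hcard : (Fintype.card n : ℂ) ≠ 0 := by
      have : 0 < Fintype.card n := Fintype.card_pos_iff.mpr ⟨p⟩
      exact_mod_cast Nat.cast_ne_zero.mpr this.ne'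
    field_simp [step2]
    rw [← step2]; simp only [eq_self_iff_true, if_true]; ring
  · -- off-diagonal rows: use the sign unitary
    have key := integral_comp_mul_left μ hμ (signUnitary p)
      (fun U => (U : Matrix n n ℂ) p i * (starRingEnd ℂ) ((U : Matrix n n ℂ) q j))
      (measurable_entry_mul p i q j).aestronglyMeasurable
    have eq1 : ∀ U : Matrix.unitaryGroup n ℂ,
        ((signUnitary p * U : Matrix.unitaryGroup n ℂ) : Matrix n n ℂ) p i *
          (starRingEnd ℂ) (((signUnitary p * U : Matrix.unitaryGroup n ℂ) : Matrix n n ℂ) q j)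
          = -((U : Matrix n n ℂ) p i * (starRingEnd ℂ) ((U : Matrix n n ℂ) q j)) := by
      intro U
      rw [signUnitary_mul_apply, signUnitary_mul_apply]
      rw [if_pos rfl, if_neg (fun hh => hpq hh.symm)]
      simp only [one_mul, _root_.map_mul]
      ring
    rw [integral_congr_ae (Filter.Eventually.of_forall eq1), integral_neg] at key
    have : ∫ U, (U : Matrix n n ℂ) p i * (starRingEnd ℂ) ((U : Matrix n n ℂ) q j) ∂μ = 0 := by
      linear_combination (-1/2 : ℂ) * key
    rw [this, if_neg hpq]
    simp

end AuxHaar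

/-- The average of a Haar-random Stinespring channel is the maximally depolarizing
channel (entrywise); equivalently the average Choi matrix is `𝟙_{d₂d₁}/d₂`. -/
theorem average_channel_is_depolarizing (d₁ d₂ M : ℕ)
    (hd₁ : 0 < d₁) (hd₂ : 0 < d₂) (hM : 0 < M) (h : d₁ ≤ d₂ * M)
    (μ : Measure (Matrix.unitaryGroup (Fin d₂ × Fin M) ℂ)) [IsProbabilityMeasure μ]
    (hμ : ∀ g : Matrix.unitaryGroup (Fin d₂ × Fin M) ℂ, μ.map (fun x => g * x) = μ) :
    (∀ (X : Matrix (Fin d₁) (Fin d₁) ℂ) (a b : Fin d₂),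
        ∫ U, stinespringChannel d₁ d₂ M h U X a b ∂μ =
          ((X.trace * (d₂ : ℂ)⁻¹) • (1 : Matrix (Fin d₂) (Fin d₂) ℂ)) a b) ∧
    (∀ p q : Fin d₂ × Fin d₁,
        ∫ U, (∑ i, ∑ j,
            (stinespringChannel d₁ d₂ M h U (Matrix.single i j (1 : ℂ))) ⊗ₖ
              Matrix.single i j (1 : ℂ)) p q ∂μ =
          ((d₂ : ℂ)⁻¹ • (1 : Matrix (Fin d₂ × Fin d₁) (Fin d₂ × Fin d₁) ℂ)) p q) := by
  set e : Fin d₁ → Fin d₂ × Fin M := fun i => finProdFinEquiv.symm (Fin.castLE h i) with he_def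
  have he : Function.Injective e := by
    intro i j hij
    have := finProdFinEquiv.symm.injective hij
    exact Fin.castLE_injective h this
  have hcard : (Fintype.card (Fin d₂ × Fin M) : ℂ) = (d₂ : ℂ) * (M : ℂ) := by
    simp [Fintype.card_prod]
  have hd₂' : (d₂ : ℂ) ≠ 0 := Nat.cast_ne_zero.mpr hd₂.ne'
  have hM' : (M : ℂ) ≠ 0 := Nat.cast_ne_zero.mpr hM.ne'
  have part1 : ∀ (X : Matrix (Fin d₁) (Fin d₁) ℂ) (a b : Fin d₂),
      ∫ U, stinespringChannel d₁ d₂ M h U X a b ∂μ =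
        ((X.trace * (d₂ : ℂ)⁻¹) • (1 : Matrix (Fin d₂) (Fin d₂) ℂ)) a b := by
    intro X a b
    have expand : ∀ U : Matrix.unitaryGroup (Fin d₂ × Fin M) ℂ,
        stinespringChannel d₁ d₂ M h U X a b
          = ∑ k : Fin M, ∑ j : Fin d₁, ∑ i : Fin d₁,
              X i j * ((U : Matrix (Fin d₂ × Fin M) (Fin d₂ × Fin M) ℂ) (a, k) (e i) *
                (starRingEnd ℂ) ((U : Matrix (Fin d₂ × Fin M) (Fin d₂ × Fin M) ℂ) (b, k) (e j))) := by
      intro U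
      show ∑ k : Fin M, (stinespringIsometry d₁ d₂ M h U * X *
          (stinespringIsometry d₁ d₂ M h U)ᴴ) (a, k) (b, k) = _
      apply Finset.sum_congr rfl
      intro k _
      rw [Matrix.mul_apply]
      apply Finset.sum_congr rfl
      intro j _
      rw [Matrix.mul_apply, Matrix.conjTranspose_apply, Finset.sum_mul]
      apply Finset.sum_congr rfl
      intro i _
      simp only [stinespringIsometry, Matrix.of_apply, Matrix.star_apply]
      ring_nf
      simp only [he_def, starRingEnd_apply]; ring
    rw [integral_congr_ae (Filter.Eventually.of_forall expand)]
    have hint : ∀ (p q : Fin d₂ × Fin M) (i j : Fin d₁),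
        Integrable (fun U : Matrix.unitaryGroup (Fin d₂ × Fin M) ℂ =>
          X i j * ((U : Matrix (Fin d₂ × Fin M) (Fin d₂ × Fin M) ℂ) p (e i) *
            (starRingEnd ℂ) ((U : Matrix (Fin d₂ × Fin M) (Fin d₂ × Fin M) ℂ) q (e j)))) μ :=
      fun p q i j => (integrable_entry_mul μ p (e i) q (e j)).const_mul _
    rw [integral_finset_sum _ (fun k _ => integrable_finset_sum _ (fun j _ =>
      integrable_finset_sum _ (fun i _ => hint (a, k) (b, k) i j)))]
    have sum_eq : ∀ k : Fin M,
        ∫ U, (∑ j : Fin d₁, ∑ i : Fin d₁,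
            X i j * ((U : Matrix (Fin d₂ × Fin M) (Fin d₂ × Fin M) ℂ) (a, k) (e i) *
              (starRingEnd ℂ) ((U : Matrix (Fin d₂ × Fin M) (Fin d₂ × Fin M) ℂ) (b, k) (e j)))) ∂μ
          = ∑ j : Fin d₁, ∑ i : Fin d₁,
              X i j * ((if a = b then 1 else 0) * (if i = j then 1 else 0)
                / ((d₂ : ℂ) * (M : ℂ))) := by
      intro k
      rw [integral_finset_sum _ (fun j _ => integrable_finset_sum _
        (fun i _ => hint (a, k) (b, k) i j))]
      apply Finset.sum_congr rfl
      intro j _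
      rw [integral_finset_sum _ (fun i _ => hint (a, k) (b, k) i j)]
      apply Finset.sum_congr rfl
      intro i _
      rw [integral_const_mul, moment μ hμ (a, k) (b, k) (e i) (e j), hcard]
      have h1 : (((a, k) : Fin d₂ × Fin M) = (b, k)) = (a = b) := by simp
      have h2 : (e i = e j) = (i = j) := by simp [he.eq_iff]
      simp only [h1, h2]
    rw [Finset.sum_congr rfl (fun k _ => sum_eq k)]
    by_cases hab : a = b
    · subst hab
      have inner : ∀ j : Fin d₁, ∑ i : Fin d₁,
          X i j * ((if a = a then (1:ℂ) else 0) * (if i = j then 1 else 0)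
            / ((d₂ : ℂ) * (M : ℂ)))
            = X j j / ((d₂ : ℂ) * (M : ℂ)) := by
        intro j
        rw [Finset.sum_eq_single j]
        · simp; rw [div_eq_mul_inv, mul_inv]; ring
        · intro i _ hij; simp [hij]
        · intro habs; exact absurd (Finset.mem_univ j) habs
      have inner2 : ∀ k : Fin M, (∑ j : Fin d₁, ∑ i : Fin d₁,
          X i j * ((if a = a then (1:ℂ) else 0) * (if i = j then 1 else 0)
            / ((d₂ : ℂ) * (M : ℂ))))
            = X.trace / ((d₂ : ℂ) * (M : ℂ)) := by
        intro k
        rw [Finset.sum_congr rfl (fun j _ => inner j), ← Finset.sum_div]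
        rfl
      rw [Finset.sum_congr rfl (fun k _ => inner2 k), Finset.sum_const, Finset.card_univ,
        Fintype.card_fin, nsmul_eq_mul, Matrix.smul_apply, Matrix.one_apply_eq, smul_eq_mul,
        mul_one]
      field_simp
    · simp only [if_neg hab, zero_mul, zero_div, mul_zero, Finset.sum_const_zero,
        Matrix.smul_apply, Matrix.one_apply_ne hab, smul_eq_mul, mul_zero]
  refine ⟨part1, ?_⟩
  rintro ⟨a, i'⟩ ⟨b, j'⟩
  have pointwise : ∀ U : Matrix.unitaryGroup (Fin d₂ × Fin M) ℂ,
      (∑ i, ∑ j, (stinespringChannel d₁ d₂ M h U (Matrix.single i j (1 : ℂ))) ⊗ₖ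
          Matrix.single i j (1 : ℂ)) (a, i') (b, j')
        = stinespringChannel d₁ d₂ M h U (Matrix.single i' j' (1 : ℂ)) a b := by
    intro U
    have hk : ∀ i j : Fin d₁,
        ((stinespringChannel d₁ d₂ M h U (Matrix.single i j (1 : ℂ))) ⊗ₖ
            Matrix.single i j (1 : ℂ)) (a, i') (b, j')
          = if j = j' then (if i = i' then
              stinespringChannel d₁ d₂ M h U (Matrix.single i j (1 : ℂ)) a b
            else 0) else 0 := by
      intro i j
      rw [Matrix.kroneckerMap_apply]
      by_cases h1 : i = i' <;> by_cases h2 : j = j' <;>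
        simp [Matrix.single, h1, h2]
    simp only [Matrix.sum_apply]
    rw [Finset.sum_congr rfl (fun i _ => Finset.sum_congr rfl (fun j _ => hk i j))]
    rw [Finset.sum_congr rfl (fun i _ =>
      Finset.sum_ite_eq' Finset.univ j' (fun j => if i = i' then
        stinespringChannel d₁ d₂ M h U (Matrix.single i j (1 : ℂ)) a b else 0))]
    simp only [Finset.mem_univ, if_true]
    rw [Finset.sum_ite_eq' Finset.univ i' (fun i =>
      stinespringChannel d₁ d₂ M h U (Matrix.single i j' (1 : ℂ)) a b)]
    simp
  rw [integral_congr_ae (Filter.Eventually.of_forall pointwise)]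
  rw [part1 (Matrix.single i' j' (1 : ℂ)) a b]
  have htr : (Matrix.single i' j' (1 : ℂ)).trace = if i' = j' then 1 else 0 := by
    rw [Matrix.trace]
    rw [Finset.sum_eq_single i']
    · by_cases hij : i' = j'
      · simp [Matrix.diag, Matrix.single, hij]
      · have hji : ¬ j' = i' := fun hh => hij hh.symm
        simp [Matrix.diag, Matrix.single, hij, hji]
    · intro i _ hi
      have : ¬ (i' = i ∧ j' = i) := fun hc => hi hc.1.symm
      simp [Matrix.diag, Matrix.single, this]
    · intro habs; exact absurd (Finset.mem_univ i') habs
  rw [htr]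
  by_cases hab : a = b
  · by_cases hij : i' = j'
    · simp [hab, hij, Matrix.one_apply]
    · have hji : ¬ j' = i' := fun hh => hij hh.symm
      simp [hab, hij, hji, Matrix.one_apply, Prod.ext_iff]
  · simp [hab, Matrix.one_apply, Prod.ext_iff]
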